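/- Let A be a commutative ring and m ≥ 3. For g ∈ SL_m(A), distinct indices i ≠ j, and a ∈ A, let v ∈ A^m be the i-th column of g, w ∈ A^m be a times the j-th row of g⁻¹ (viewed as a row vector), and let (g₁,…,g_m) be the i-th row of g⁻¹. Then Σ_l g_l v_l = 1 and Σ_l w_l v_l = 0, and setting b_{l,n} = w_l g_n − w_n g_l one has w = Σ_{l<n} b_{l,n}(v_n e_l − v_l e_n), where e_l denotes the l-th standard basis row vector. Consequently g·E_{i,j}(a)·g⁻¹ = I_m + v·w = ∏_{l<n} (I_m + v·b_{l,n}(v_n e_l − v_l e_n)), where the factors in the product pairwise commute. -/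

import Mathlib

open Matrix

private lemma suslin_aux_prod {R : Type*} [Ring R] {ι : Type*} [DecidableEq ι] (M : ι → R)
    (hM : ∀ p q, M p * M q = 0) (s : Finset ι) :
    ∀ comm : (↑s : Set ι).Pairwise (Function.onFun Commute fun p => (1:R) + M p),
      s.noncommProd (fun p => 1 + M p) comm = 1 + ∑ p ∈ s, M p := by
  induction s using Finset.induction_on with
  | empty => intro comm; simp
  | @insert x s hx ih =>
      intro comm
      rw [Finset.noncommProd_insert_of_notMem _ _ _ _ hx, ih, Finset.sum_insert hx]
      have h0 : M x * ∑ p ∈ s, M p = 0 := by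
        rw [Finset.mul_sum]
        exact Finset.sum_eq_zero fun p _ => hM x p
      rw [one_add_mul, mul_one_add, h0]
      abel

private lemma suslin_aux_commute {R : Type*} [Ring R] (M N : R) (h1 : M * N = 0)
    (h2 : N * M = 0) : Commute (1 + M) (1 + N) := by
  unfold Commute SemiconjBy
  rw [one_add_mul, one_add_mul, mul_one_add, mul_one_add, h1, h2]
  abel

theorem suslin_factorization
    {A : Type} [CommRing A] {m : ℕ} (hm : 3 ≤ m)
    (g : Matrix.SpecialLinearGroup (Fin m) A) (i j : Fin m) (hij : i ≠ j) (a : A)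
    (v w gi : Fin m → A) (bfun : Fin m → Fin m → A)
    (hv : ∀ l, v l = (g : Matrix (Fin m) (Fin m) A) l i)
    (hw : ∀ l, w l = a * ((g⁻¹ : Matrix.SpecialLinearGroup (Fin m) A) :
        Matrix (Fin m) (Fin m) A) j l)
    (hgi : ∀ l, gi l = ((g⁻¹ : Matrix.SpecialLinearGroup (Fin m) A) :
        Matrix (Fin m) (Fin m) A) i l)
    (hb : ∀ l n, bfun l n = w l * gi n - w n * gi l)
    (F : Fin m × Fin m → Matrix (Fin m) (Fin m) A)
    (hF : ∀ p : Fin m × Fin m, F p = 1 + Matrix.vecMulVec v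
      (fun q => bfun p.1 p.2 * (v p.2 * (Pi.single p.1 1 : Fin m → A) q -
        v p.1 * (Pi.single p.2 1 : Fin m → A) q))) :
    (∑ l, gi l * v l = 1) ∧
    (∑ l, w l * v l = 0) ∧
    (∀ q : Fin m, w q = ∑ l, ∑ n, if l < n then
      bfun l n * (v n * (Pi.single l 1 : Fin m → A) q - v l * (Pi.single n 1 : Fin m → A) q) else 0) ∧
    ((g : Matrix (Fin m) (Fin m) A) * (1 + Matrix.single i j a) *
        ((g⁻¹ : Matrix.SpecialLinearGroup (Fin m) A) : Matrix (Fin m) (Fin m) A) =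
      1 + Matrix.vecMulVec v w) ∧
    (∃ comm : ((Finset.univ.filter (fun p : Fin m × Fin m => p.1 < p.2) : Finset _) :
        Set (Fin m × Fin m)).Pairwise (fun p q => Commute (F p) (F q)),
      (g : Matrix (Fin m) (Fin m) A) * (1 + Matrix.single i j a) *
          ((g⁻¹ : Matrix.SpecialLinearGroup (Fin m) A) : Matrix (Fin m) (Fin m) A) =
        (Finset.univ.filter (fun p : Fin m × Fin m => p.1 < p.2)).noncommProd F comm) := by
  classical
  set G : Matrix (Fin m) (Fin m) A := (g : Matrix (Fin m) (Fin m) A) with hG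
  set Gi : Matrix (Fin m) (Fin m) A :=
    ((g⁻¹ : Matrix.SpecialLinearGroup (Fin m) A) : Matrix (Fin m) (Fin m) A) with hGidef
  have hGiG : Gi * G = 1 := by
    rw [hGidef, hG, ← Matrix.SpecialLinearGroup.coe_mul, inv_mul_cancel]; rfl
  have hGGi : G * Gi = 1 := by
    rw [hGidef, hG, ← Matrix.SpecialLinearGroup.coe_mul, mul_inv_cancel]; rfl
  -- claim 1
  have h1 : ∑ l, gi l * v l = 1 := by
    have := congrArg (fun M : Matrix (Fin m) (Fin m) A => M i i) hGiG
    simpa [Matrix.mul_apply, Matrix.one_apply, hgi, hv] using this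
  -- claim 2
  have h2 : ∑ l, w l * v l = 0 := by
    have h := congrArg (fun M : Matrix (Fin m) (Fin m) A => M j i) hGiG
    simp only [Matrix.mul_apply, Matrix.one_apply, if_neg (Ne.symm hij)] at h
    calc ∑ l, w l * v l = a * ∑ l, Gi j l * G l i := by
          rw [Finset.mul_sum]; exact Finset.sum_congr rfl fun l _ => by rw [hw, hv]; ring
      _ = 0 := by rw [h, mul_zero]
  have hbv : ∀ q, ∑ n, bfun q n * v n = w q := by
    intro q
    have e : ∑ n, bfun q n * v n
        = w q * (∑ n, gi n * v n) - gi q * (∑ n, w n * v n) := by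
      rw [Finset.mul_sum, Finset.mul_sum, ← Finset.sum_sub_distrib]
      exact Finset.sum_congr rfl fun n _ => by rw [hb]; ring
    rw [e, h1, h2]; ring
  -- claim 3
  have h3 : ∀ q : Fin m, w q = ∑ l, ∑ n, if l < n then
      bfun l n * (v n * (Pi.single l 1 : Fin m → A) q - v l * (Pi.single n 1 : Fin m → A) q)
      else 0 := by
    intro q
    have split : ∀ l n : Fin m,
        (if l < n then bfun l n * (v n * (Pi.single l 1 : Fin m → A) q
            - v l * (Pi.single n 1 : Fin m → A) q) else 0)
        = (if q = l then (if l < n then bfun l n * v n else 0) else 0)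
          - (if n = q then (if l < n then bfun l n * v l else 0) else 0) := by
      intro l n
      simp only [Pi.single_apply]
      split_ifs <;> subst_vars <;>
        first
          | ring1
          | exact absurd rfl ‹¬_ = _›
          | exact absurd ‹_ < _› (lt_irrefl _)
          | simp_all
    simp only [split, Finset.sum_sub_distrib]
    have e1 : (∑ l, ∑ n, if q = l then (if l < n then bfun l n * v n else 0) else 0)
        = ∑ n, if q < n then bfun q n * v n else 0 := by
      have e : ∀ l : Fin m, (∑ n, if q = l then (if l < n then bfun l n * v n else 0) else 0)
          = if q = l then (∑ n, if l < n then bfun l n * v n else 0) else 0 := fun l => by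
        split <;> simp
      rw [Finset.sum_congr rfl fun l _ => e l, Finset.sum_ite_eq]
      simp
    have e2 : (∑ l, ∑ n, if n = q then (if l < n then bfun l n * v l else 0) else 0)
        = ∑ l, if l < q then bfun l q * v l else 0 := by
      refine Finset.sum_congr rfl fun l _ => ?_
      rw [Finset.sum_ite_eq']
      simp
    rw [e1, e2, ← hbv q, ← Finset.sum_sub_distrib]
    refine Finset.sum_congr rfl fun n _ => ?_
    rcases lt_trichotomy q n with h | h | h
    · rw [if_pos h, if_neg (asymm h), sub_zero]
    · subst h
      simp only [lt_self_iff_false, if_false]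
      rw [hb]
      ring
    · rw [if_neg (asymm h), if_pos h, hb, hb]
      ring
  -- claim 4
  have key4 : G * Matrix.single i j a * Gi = Matrix.vecMulVec v w := by
    ext p q
    simp only [Matrix.mul_apply, Matrix.single, Matrix.vecMulVec_apply,
      Matrix.of_apply, ite_and, mul_ite, ite_mul, zero_mul, mul_zero,
      Finset.sum_ite_eq, Finset.mem_univ, if_true]
    rw [hv, hw]
    first
    | ring1
    | (rw [Finset.sum_ite_eq']; simp only [Finset.mem_univ, if_true]; ring)
  have h4 : G * (1 + Matrix.single i j a) * Gi = 1 + Matrix.vecMulVec v w := by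
    rw [mul_add, mul_one, add_mul, hGGi, key4]
  -- claim 5
  set c : Fin m × Fin m → Fin m → A := fun p q =>
    bfun p.1 p.2 * (v p.2 * (Pi.single p.1 1 : Fin m → A) q -
      v p.1 * (Pi.single p.2 1 : Fin m → A) q) with hc
  set Mf : Fin m × Fin m → Matrix (Fin m) (Fin m) A := fun p => Matrix.vecMulVec v (c p)
    with hMf
  have hFM : ∀ p, F p = 1 + Mf p := fun p => hF p
  have hcv : ∀ p, ∑ s, c p s * v s = 0 := by
    intro p
    have e : ∑ s, c p s * v s
        = bfun p.1 p.2 * (v p.2 * (∑ s, (Pi.single p.1 1 : Fin m → A) s * v s)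
          - v p.1 * (∑ s, (Pi.single p.2 1 : Fin m → A) s * v s)) := by
      rw [Finset.mul_sum, Finset.mul_sum, ← Finset.sum_sub_distrib, Finset.mul_sum]
      exact Finset.sum_congr rfl fun s _ => by rw [hc]; ring
    have es : ∀ t : Fin m, ∑ s, (Pi.single t 1 : Fin m → A) s * v s = v t := by
      intro t
      simp [Pi.single_apply, ite_mul, Finset.sum_ite_eq']
    rw [e, es, es]
    ring
  have hMM : ∀ p q, Mf p * Mf q = 0 := by
    intro p q
    ext x y
    simp only [Matrix.mul_apply, hMf, Matrix.vecMulVec_apply, Matrix.zero_apply]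
    calc ∑ s, v x * c p s * (v s * c q y)
        = (∑ s, c p s * v s) * (v x * c q y) := by
          rw [Finset.sum_mul]; exact Finset.sum_congr rfl fun s _ => by ring
      _ = 0 := by rw [hcv, zero_mul]
  have comm : ((Finset.univ.filter (fun p : Fin m × Fin m => p.1 < p.2) : Finset _) :
      Set (Fin m × Fin m)).Pairwise (fun p q => Commute (F p) (F q)) := by
    intro p _ q _ _
    rw [hFM, hFM]
    exact suslin_aux_commute _ _ (hMM p q) (hMM q p)
  refine ⟨h1, h2, h3, h4, comm, ?_⟩
  have comm' : ((Finset.univ.filter (fun p : Fin m × Fin m => p.1 < p.2) : Finset _) :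
      Set (Fin m × Fin m)).Pairwise (Function.onFun Commute fun p => (1 : Matrix (Fin m) (Fin m) A) + Mf p) := by
    intro p _ q _ _
    exact suslin_aux_commute _ _ (hMM p q) (hMM q p)
  have eprod : (Finset.univ.filter (fun p : Fin m × Fin m => p.1 < p.2)).noncommProd F comm
      = (Finset.univ.filter (fun p : Fin m × Fin m => p.1 < p.2)).noncommProd
        (fun p => 1 + Mf p) comm' := by
    exact Finset.noncommProd_congr rfl (fun p _ => hFM p) _
  rw [eprod, suslin_aux_prod Mf hMM _ comm', h4]
  congr 1
  ext x y
  rw [Matrix.sum_apply]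
  simp only [hMf, Matrix.vecMulVec_apply]
  rw [← Finset.mul_sum]
  congr 1
  rw [Finset.sum_filter, Fintype.sum_prod_type, h3 y]
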